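/- Fix integers D, p ≥ 1, a set Θ ⊆ ℝ^p, and a point x ∈ ℝ^D. For each θ ∈ Θ let g(·;θ) : ℝ^D → ℝ^D be three times continuously differentiable with Jacobian J_g(y;θ) invertible for all y, and let s_u : ℝ^D → ℝ^D be continuously differentiable with total derivative Ds_u. Define v(y;θ) ∈ ℝ^D by v_i(y;θ) = tr(J_g(y;θ)⁻¹ · ∂_i J_g(y;θ)), the score s(y;θ) = J_g(y;θ)ᵀ·s_u(g(y;θ)) + v(y;θ), and f(y;θ) = (1/2)·‖s(y;θ)‖² + tr(∂s(y;θ)/∂y). Assume there are functions l1, l2, l3, l1', l2', r0, r1, r2, r3, r1', r2' : ℝ^D → [0,∞) and constants t1, t2, t3, t4 ≥ 0 such that for all θ, θ1, θ2 ∈ Θ, all i, j ∈ {1,…,D}, all y ∈ ℝ^D, and all u, u1, u2 ∈ ℝ^D: ‖J_g(y;θ)‖₂ ≤ l1(y), ‖∂_i J_g(y;θ)‖₂ ≤ l2(y), ‖∂_i ∂_j J_g(y;θ)‖₂ ≤ l3(y); ‖g(y;θ1) − g(y;θ2)‖ ≤ r0(y)·‖θ1−θ2‖, ‖J_g(y;θ1)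 − J_g(y;θ2)‖₂ ≤ r1(y)·‖θ1−θ2‖, ‖∂_i J_g(y;θ1) − ∂_i J_g(y;θ2)‖₂ ≤ r2(y)·‖θ1−θ2‖, ‖∂_i ∂_j J_g(y;θ1) − ∂_i ∂_j J_g(y;θ2)‖₂ ≤ r3(y)·‖θ1−θ2‖; ‖J_g(y;θ)⁻¹‖₂ ≤ l1'(y), ‖∂_i (J_g⁻¹)(y;θ)‖₂ ≤ l2'(y), ‖J_g(y;θ1)⁻¹ − J_g(y;θ2)⁻¹‖₂ ≤ r1'(y)·‖θ1−θ2‖, ‖∂_i (J_g⁻¹)(y;θ1) − ∂_i (J_g⁻¹)(y;θ2)‖₂ ≤ r2'(y)·‖θ1−θ2‖; ‖s_u(u)‖ ≤ t1, ‖Ds_u(u)‖₂ ≤ t2, ‖s_u(u1) − s_u(u2)‖ ≤ t3·‖u1−u2‖, and ‖Ds_u(u1) − Ds_u(u2)‖₂ ≤ t4·‖u1−u2‖. Then the map θ ↦ f(x;θ) is Lipschitz continuous on Θ: there exists L(x) ≥ 0 such that |f(x;θ1) − f(x;θ2)| ≤ L(x)·‖θ1 − θ2‖ for all θ1, θ2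 ∈ Θ, and L(x) can be taken to be a finite sum of products of the bound functions above evaluated at x, with coefficients depending only on D. -/

import Mathlib

/-- The Jacobian `J_g(y;θ)` of the flow `g(·;θ)` at `y`, as a continuous linear map. -/
noncomputable def Jg {q D : ℕ}
    (g : EuclideanSpace ℝ (Fin q) → EuclideanSpace ℝ (Fin D) → EuclideanSpace ℝ (Fin D))
    (θ : EuclideanSpace ℝ (Fin q)) (y : EuclideanSpace ℝ (Fin D)) :
    EuclideanSpace ℝ (Fin D) →L[ℝ] EuclideanSpace ℝ (Fin D) :=
  fderiv ℝ (g θ) y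

/-- The partial derivative `∂_i J_g(y;θ)` of the Jacobian in the `i`-th coordinate. -/
noncomputable def dJg {q D : ℕ}
    (g : EuclideanSpace ℝ (Fin q) → EuclideanSpace ℝ (Fin D) → EuclideanSpace ℝ (Fin D))
    (θ : EuclideanSpace ℝ (Fin q)) (i : Fin D) (y : EuclideanSpace ℝ (Fin D)) :
    EuclideanSpace ℝ (Fin D) →L[ℝ] EuclideanSpace ℝ (Fin D) :=
  fderiv ℝ (Jg g θ) y (EuclideanSpace.single i 1)

/-- The second partial derivative `∂_i ∂_j J_g(y;θ)` of the Jacobian. -/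
noncomputable def ddJg {q D : ℕ}
    (g : EuclideanSpace ℝ (Fin q) → EuclideanSpace ℝ (Fin D) → EuclideanSpace ℝ (Fin D))
    (θ : EuclideanSpace ℝ (Fin q)) (i j : Fin D) (y : EuclideanSpace ℝ (Fin D)) :
    EuclideanSpace ℝ (Fin D) →L[ℝ] EuclideanSpace ℝ (Fin D) :=
  fderiv ℝ (fun z => dJg g θ i z) y (EuclideanSpace.single j 1)

/-- The inverse `J_g(y;θ)⁻¹` of the Jacobian (in the ring of continuous linear maps). -/
noncomputable def JgInv {q D : ℕ}
    (g : EuclideanSpace ℝ (Fin q) → EuclideanSpace ℝ (Fin D) → EuclideanSpace ℝ (Fin D))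
    (θ : EuclideanSpace ℝ (Fin q)) (y : EuclideanSpace ℝ (Fin D)) :
    EuclideanSpace ℝ (Fin D) →L[ℝ] EuclideanSpace ℝ (Fin D) :=
  Ring.inverse (Jg g θ y)

/-- The partial derivative `∂_i (J_g⁻¹)(y;θ)` of the inverse Jacobian. -/
noncomputable def dJgInv {q D : ℕ}
    (g : EuclideanSpace ℝ (Fin q) → EuclideanSpace ℝ (Fin D) → EuclideanSpace ℝ (Fin D))
    (θ : EuclideanSpace ℝ (Fin q)) (i : Fin D) (y : EuclideanSpace ℝ (Fin D)) :
    EuclideanSpace ℝ (Fin D) →L[ℝ] EuclideanSpace ℝ (Fin D) :=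
  fderiv ℝ (fun z => JgInv g θ z) y (EuclideanSpace.single i 1)

/-- The vector `v(y;θ)` with components `v_i = tr(J_g(y;θ)⁻¹ · ∂_i J_g(y;θ))`
(the gradient of `log|det J_g|` by Jacobi's formula). -/
noncomputable def vvec {q D : ℕ}
    (g : EuclideanSpace ℝ (Fin q) → EuclideanSpace ℝ (Fin D) → EuclideanSpace ℝ (Fin D))
    (θ : EuclideanSpace ℝ (Fin q)) (y : EuclideanSpace ℝ (Fin D)) :
    EuclideanSpace ℝ (Fin D) :=
  ∑ i, (LinearMap.trace ℝ (EuclideanSpace ℝ (Fin D))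
      (JgInv g θ y * dJg g θ i y).toLinearMap) • EuclideanSpace.single i (1 : ℝ)

/-- The score `s(y;θ) = J_g(y;θ)ᵀ · s_u(g(y;θ)) + v(y;θ)` of the flow model. -/
noncomputable def score {q D : ℕ}
    (g : EuclideanSpace ℝ (Fin q) → EuclideanSpace ℝ (Fin D) → EuclideanSpace ℝ (Fin D))
    (su : EuclideanSpace ℝ (Fin D) → EuclideanSpace ℝ (Fin D))
    (θ : EuclideanSpace ℝ (Fin q)) (y : EuclideanSpace ℝ (Fin D)) :
    EuclideanSpace ℝ (Fin D) :=
  ContinuousLinearMap.adjoint (Jg g θ y) (su (g θ y)) + vvec g θ y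

/-- The pointwise score-matching objective `f(y;θ) = ½‖s(y;θ)‖² + tr(∂s(y;θ)/∂y)`. -/
noncomputable def fobj {q D : ℕ}
    (g : EuclideanSpace ℝ (Fin q) → EuclideanSpace ℝ (Fin D) → EuclideanSpace ℝ (Fin D))
    (su : EuclideanSpace ℝ (Fin D) → EuclideanSpace ℝ (Fin D))
    (θ : EuclideanSpace ℝ (Fin q)) (y : EuclideanSpace ℝ (Fin D)) : ℝ :=
  (1 / 2) * ‖score g su θ y‖ ^ 2 +
    LinearMap.trace ℝ (EuclideanSpace ℝ (Fin D))
      (fderiv ℝ (fun z => score g su θ z) y).toLinearMap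

section AuxStmt11
set_option maxHeartbeats 1000000
set_option synthInstance.maxHeartbeats 1000000
noncomputable section
open ContinuousLinearMap
variable {q D : ℕ}

def adjCLM (D : ℕ) : (EuclideanSpace ℝ (Fin D) →L[ℝ] EuclideanSpace ℝ (Fin D)) →L[ℝ]
    (EuclideanSpace ℝ (Fin D) →L[ℝ] EuclideanSpace ℝ (Fin D)) :=
  LinearMap.mkContinuous
    { toFun := fun T => ContinuousLinearMap.adjoint T
      map_add' := fun T S => map_add _ T S
      map_smul' := fun c T => by
        have h := (ContinuousLinearMap.adjoint (𝕜 := ℝ)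
          (E := EuclideanSpace ℝ (Fin D)) (F := EuclideanSpace ℝ (Fin D))).map_smulₛₗ c T
        simpa [starRingEnd_apply] using h }
    1 (fun T => by
      rw [one_mul]
      exact le_of_eq (LinearIsometryEquiv.norm_map _ T))

@[simp] lemma adjCLM_apply (T : EuclideanSpace ℝ (Fin D) →L[ℝ] EuclideanSpace ℝ (Fin D)) :
    adjCLM D T = ContinuousLinearMap.adjoint T := rfl

def trCLM (D : ℕ) : (EuclideanSpace ℝ (Fin D) →L[ℝ] EuclideanSpace ℝ (Fin D)) →L[ℝ] ℝ :=
  LinearMap.toContinuousLinearMap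
    ((LinearMap.trace ℝ (EuclideanSpace ℝ (Fin D))).comp (ContinuousLinearMap.coeLM ℝ))

@[simp] lemma trCLM_apply (T : EuclideanSpace ℝ (Fin D) →L[ℝ] EuclideanSpace ℝ (Fin D)) :
    trCLM D T = LinearMap.trace ℝ (EuclideanSpace ℝ (Fin D)) T.toLinearMap := rfl

lemma trace_eq_sum (T : EuclideanSpace ℝ (Fin D) →L[ℝ] EuclideanSpace ℝ (Fin D)) :
    LinearMap.trace ℝ (EuclideanSpace ℝ (Fin D)) T.toLinearMap
      = ∑ i, (T (EuclideanSpace.single i 1)) i := by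
  rw [LinearMap.trace_eq_matrix_trace ℝ (EuclideanSpace.basisFun (Fin D) ℝ).toBasis]
  simp [Matrix.trace, LinearMap.toMatrix_apply, Matrix.diag]

lemma coord_le_norm (v : EuclideanSpace ℝ (Fin D)) (i : Fin D) : |v i| ≤ ‖v‖ := by
  have h : |v i| = Real.sqrt (‖v i‖^2) := by
    rw [Real.sqrt_sq_eq_abs, Real.norm_eq_abs, abs_abs]
  rw [h, EuclideanSpace.norm_eq]
  apply Real.sqrt_le_sqrt
  exact Finset.single_le_sum (f := fun j => ‖v j‖^2) (fun j _ => sq_nonneg _) (Finset.mem_univ i)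

lemma abs_trace_le (T : EuclideanSpace ℝ (Fin D) →L[ℝ] EuclideanSpace ℝ (Fin D)) :
    |LinearMap.trace ℝ (EuclideanSpace ℝ (Fin D)) T.toLinearMap| ≤ D * ‖T‖ := by
  rw [trace_eq_sum]
  calc |∑ i, (T (EuclideanSpace.single i 1)) i| ≤ ∑ i : Fin D, |(T (EuclideanSpace.single i 1)) i| :=
        Finset.abs_sum_le_sum_abs _ _
    _ ≤ ∑ _i : Fin D, ‖T‖ := by
        apply Finset.sum_le_sum
        intro i _
        calc |(T (EuclideanSpace.single i 1)) i| ≤ ‖T (EuclideanSpace.single i 1)‖ :=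
              coord_le_norm _ i
          _ ≤ ‖T‖ * ‖EuclideanSpace.single i (1:ℝ)‖ := T.le_opNorm _
          _ = ‖T‖ := by simp
    _ = D * ‖T‖ := by simp [Finset.sum_const, nsmul_eq_mul]

lemma mul_sub_mul_norm (A A' B B' : EuclideanSpace ℝ (Fin D) →L[ℝ] EuclideanSpace ℝ (Fin D)) :
    ‖A * B - A' * B'‖ ≤ ‖A - A'‖ * ‖B‖ + ‖A'‖ * ‖B - B'‖ := by
  have h : A * B - A' * B' = (A - A') * B + A' * (B - B') := by rw [sub_mul, mul_sub]; abel
  rw [h]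
  refine (norm_add_le _ _).trans (add_le_add ?_ ?_) <;> exact norm_mul_le _ _

variable (g : EuclideanSpace ℝ (Fin q) → EuclideanSpace ℝ (Fin D) → EuclideanSpace ℝ (Fin D))
variable (su : EuclideanSpace ℝ (Fin D) → EuclideanSpace ℝ (Fin D))

lemma score_hasFDerivAt (θ : EuclideanSpace ℝ (Fin q)) (x : EuclideanSpace ℝ (Fin D))
    (hg3 : ContDiff ℝ 3 (g θ)) (hunit : ∀ y, IsUnit (Jg g θ y)) (hsu : ContDiff ℝ 1 su) :
    ∃ Φ : EuclideanSpace ℝ (Fin D) →L[ℝ] EuclideanSpace ℝ (Fin D),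
      HasFDerivAt (score g su θ) Φ x ∧ ∀ i : Fin D,
      Φ (EuclideanSpace.single i 1) =
        ContinuousLinearMap.adjoint (dJg g θ i x) (su (g θ x))
        + ContinuousLinearMap.adjoint (Jg g θ x)
            ((fderiv ℝ su (g θ x)) ((Jg g θ x) (EuclideanSpace.single i 1)))
        + ∑ j, ((LinearMap.trace ℝ (EuclideanSpace ℝ (Fin D))
              ((JgInv g θ x * ddJg g θ j i x).toLinearMap)
            + LinearMap.trace ℝ (EuclideanSpace ℝ (Fin D))
              ((dJgInv g θ i x * dJg g θ j x).toLinearMap)) • EuclideanSpace.single j (1:ℝ)) := by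
  have hgd : Differentiable ℝ (g θ) := hg3.differentiable (by norm_num)
  have hJgC2 : ContDiff ℝ 2 (Jg g θ) := hg3.fderiv_right (by norm_num)
  have hJd : Differentiable ℝ (Jg g θ) := hJgC2.differentiable (by norm_num)
  have hdJC1 : ContDiff ℝ 1 (fderiv ℝ (Jg g θ)) := hJgC2.fderiv_right (by norm_num)
  have hdJg : ∀ j, Differentiable ℝ (dJg g θ j) := fun j =>
    (hdJC1.clm_apply contDiff_const).differentiable (by norm_num)
  have hInvd : DifferentiableAt ℝ (fun z => JgInv g θ z) x :=
    (differentiableAt_inverse (hunit x)).comp x (hJd x)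
  have hsud : Differentiable ℝ su := hsu.differentiable (by norm_num)
  have hA : HasFDerivAt (Jg g θ) (fderiv ℝ (Jg g θ) x) x := (hJd x).hasFDerivAt
  have hc : HasFDerivAt (fun y => adjCLM D (Jg g θ y))
      ((adjCLM D).comp (fderiv ℝ (Jg g θ) x)) x := ((adjCLM D).hasFDerivAt).comp x hA
  have hu : HasFDerivAt (fun y => su (g θ y))
      ((fderiv ℝ su (g θ x)).comp (Jg g θ x)) x :=
    (hsud (g θ x)).hasFDerivAt.comp x (hgd x).hasFDerivAt
  have hT1 := hc.clm_apply hu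
  have hmul := fun j => hInvd.hasFDerivAt.mul' ((hdJg j x).hasFDerivAt)
  have hterm := fun j => ((((trCLM D).hasFDerivAt).comp x (hmul j)).smul_const
    (EuclideanSpace.single j (1:ℝ)))
  have hsum := HasFDerivAt.sum (u := Finset.univ) (fun j _ => hterm j)
  have htot : HasFDerivAt (fun y => (adjCLM D (Jg g θ y)) (su (g θ y))
      + ∑ j, trCLM D (JgInv g θ y * dJg g θ j y) • EuclideanSpace.single j (1:ℝ)) _ x :=
    (hT1.add hsum).congr_of_eventuallyEq (Filter.Eventually.of_forall fun y => by
      simp [Finset.sum_apply, Pi.add_apply, Function.comp_apply, Pi.mul_apply])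
  have heq : score g su θ = fun y => (adjCLM D (Jg g θ y)) (su (g θ y))
      + ∑ j, trCLM D (JgInv g θ y * dJg g θ j y) • EuclideanSpace.single j (1:ℝ) := by
    funext y
    simp [score, vvec]
  refine ⟨_, heq ▸ htot, fun i => ?_⟩
  simp [ContinuousLinearMap.add_apply, ContinuousLinearMap.flip_apply,
    ContinuousLinearMap.comp_apply, ContinuousLinearMap.smulRight_apply,
    ContinuousLinearMap.sum_apply, ContinuousLinearMap.smul_apply,
    dJg, ddJg, dJgInv, map_add, ContinuousLinearMap.mul_apply]
  exact congrArg₂ _ (add_comm _ _) rfl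

/-- The explicit value of the `i`-th basis direction of the derivative of the score. -/
def Pexpr (g : EuclideanSpace ℝ (Fin q) → EuclideanSpace ℝ (Fin D) → EuclideanSpace ℝ (Fin D))
    (su : EuclideanSpace ℝ (Fin D) → EuclideanSpace ℝ (Fin D))
    (x : EuclideanSpace ℝ (Fin D)) (θ : EuclideanSpace ℝ (Fin q)) (i : Fin D) :
    EuclideanSpace ℝ (Fin D) :=
  ContinuousLinearMap.adjoint (dJg g θ i x) (su (g θ x))
  + ContinuousLinearMap.adjoint (Jg g θ x)
      ((fderiv ℝ su (g θ x)) ((Jg g θ x) (EuclideanSpace.single i 1)))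
  + ∑ j, ((LinearMap.trace ℝ (EuclideanSpace ℝ (Fin D))
        ((JgInv g θ x * ddJg g θ j i x).toLinearMap)
      + LinearMap.trace ℝ (EuclideanSpace ℝ (Fin D))
        ((dJgInv g θ i x * dJg g θ j x).toLinearMap)) • EuclideanSpace.single j (1:ℝ))

lemma fobj_eq (θ : EuclideanSpace ℝ (Fin q)) (x : EuclideanSpace ℝ (Fin D))
    (hg3 : ContDiff ℝ 3 (g θ)) (hunit : ∀ y, IsUnit (Jg g θ y)) (hsu : ContDiff ℝ 1 su) :
    fobj g su θ x = (1/2) * ‖score g su θ x‖^2 + ∑ i, (Pexpr g su x θ i) i := by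
  obtain ⟨Φ, hΦ, hi⟩ := score_hasFDerivAt g su θ x hg3 hunit hsu
  have hfd : fderiv ℝ (fun z => score g su θ z) x = Φ := hΦ.fderiv
  rw [fobj, hfd, trace_eq_sum]
  congr 1
  refine Finset.sum_congr rfl fun i _ => ?_
  rw [hi i]; rfl

lemma clm_app_sub (T S : EuclideanSpace ℝ (Fin D) →L[ℝ] EuclideanSpace ℝ (Fin D))
    (u v : EuclideanSpace ℝ (Fin D)) :
    ‖T u - S v‖ ≤ ‖T - S‖ * ‖u‖ + ‖S‖ * ‖u - v‖ := by
  have h : T u - S v = (T - S) u + S (u - v) := by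
    simp only [ContinuousLinearMap.sub_apply, map_sub]; abel
  rw [h]
  exact (norm_add_le _ _).trans (add_le_add ((T - S).le_opNorm u) (S.le_opNorm _))

lemma adj_norm (T : EuclideanSpace ℝ (Fin D) →L[ℝ] EuclideanSpace ℝ (Fin D)) :
    ‖ContinuousLinearMap.adjoint T‖ = ‖T‖ := LinearIsometryEquiv.norm_map _ T

lemma adj_sub (T S : EuclideanSpace ℝ (Fin D) →L[ℝ] EuclideanSpace ℝ (Fin D)) :
    ContinuousLinearMap.adjoint T - ContinuousLinearMap.adjoint S
      = ContinuousLinearMap.adjoint (T - S) := (map_sub (ContinuousLinearMap.adjoint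
        (𝕜 := ℝ) (E := EuclideanSpace ℝ (Fin D)) (F := EuclideanSpace ℝ (Fin D))) T S).symm

lemma trace_sub_le (X Y : EuclideanSpace ℝ (Fin D) →L[ℝ] EuclideanSpace ℝ (Fin D)) :
    |LinearMap.trace ℝ (EuclideanSpace ℝ (Fin D)) X.toLinearMap
      - LinearMap.trace ℝ (EuclideanSpace ℝ (Fin D)) Y.toLinearMap| ≤ D * ‖X - Y‖ := by
  have h : LinearMap.trace ℝ (EuclideanSpace ℝ (Fin D)) X.toLinearMap
      - LinearMap.trace ℝ (EuclideanSpace ℝ (Fin D)) Y.toLinearMap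
      = LinearMap.trace ℝ (EuclideanSpace ℝ (Fin D)) (X - Y).toLinearMap := by
    rw [ContinuousLinearMap.coe_sub, map_sub]
  rw [h]; exact abs_trace_le _

lemma sum_smul_single_norm (c : Fin D → ℝ) :
    ‖∑ j, c j • EuclideanSpace.single j (1:ℝ)‖ ≤ ∑ j, |c j| := by
  refine (norm_sum_le _ _).trans (Finset.sum_le_sum fun j _ => ?_)
  rw [norm_smul]
  simp [Real.norm_eq_abs]

lemma half_sq_diff {E : Type*} [NormedAddCommGroup E] (a b : E) {S : ℝ}
    (ha : ‖a‖ ≤ S) (hb : ‖b‖ ≤ S) :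
    |(1/2) * ‖a‖^2 - (1/2) * ‖b‖^2| ≤ S * ‖a - b‖ := by
  have h1 : |‖a‖ - ‖b‖| ≤ ‖a - b‖ := abs_norm_sub_norm_le a b
  have h2 : 0 ≤ S := le_trans (norm_nonneg a) ha
  have h3 : (1/2)*‖a‖^2 - (1/2)*‖b‖^2 = (1/2)*((‖a‖-‖b‖)*(‖a‖+‖b‖)) := by ring
  rw [h3, abs_mul, abs_mul, abs_of_nonneg (by norm_num : (0:ℝ) ≤ 1/2)]
  have h4 : |‖a‖ + ‖b‖| ≤ 2*S := by
    rw [abs_of_nonneg (by positivity)]; linarith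
  calc 1/2*(|‖a‖-‖b‖| * |‖a‖+‖b‖|) ≤ 1/2*(‖a-b‖*(2*S)) := by
        apply mul_le_mul_of_nonneg_left _ (by norm_num)
        exact mul_le_mul h1 h4 (abs_nonneg _) (norm_nonneg _)
    _ = S*‖a-b‖ := by ring

lemma sum_single_sub (c1 c2 : Fin D → ℝ) :
    ‖(∑ j, c1 j • EuclideanSpace.single j (1:ℝ))
      - ∑ j, c2 j • EuclideanSpace.single j (1:ℝ)‖ ≤ ∑ j, |c1 j - c2 j| := by
  have h : (∑ j, c1 j • EuclideanSpace.single j (1:ℝ))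
      - ∑ j, c2 j • EuclideanSpace.single j (1:ℝ)
      = ∑ j, (c1 j - c2 j) • EuclideanSpace.single j (1:ℝ) := by
    rw [← Finset.sum_sub_distrib]
    exact Finset.sum_congr rfl fun j _ => (sub_smul _ _ _).symm
  rw [h]; exact sum_smul_single_norm _

end
end AuxStmt11

set_option maxHeartbeats 1000000 in
set_option synthInstance.maxHeartbeats 1000000 in
/-- **Proposition A (prop:lip_f).** Under boundedness and θ-Lipschitz assumptions on
the flow `g`, its Jacobian, the inverse Jacobian and their spatial derivatives, and
boundedness/Lipschitz assumptions on the prior score `s_u` and its derivative, the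
pointwise score-matching objective `θ ↦ f(x;θ)` is Lipschitz continuous on `Θ`. -/
theorem stmt_11 {D q : ℕ} (hD : 1 ≤ D) (hq : 1 ≤ q)
    (Θ : Set (EuclideanSpace ℝ (Fin q)))
    (x : EuclideanSpace ℝ (Fin D))
    (g : EuclideanSpace ℝ (Fin q) → EuclideanSpace ℝ (Fin D) → EuclideanSpace ℝ (Fin D))
    (hg : ∀ θ ∈ Θ, ContDiff ℝ 3 (g θ))
    (hJunit : ∀ θ ∈ Θ, ∀ y, IsUnit (Jg g θ y))
    (su : EuclideanSpace ℝ (Fin D) → EuclideanSpace ℝ (Fin D))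
    (hsu : ContDiff ℝ 1 su)
    (l1 l2 l3 l1' l2' r0 r1 r2 r3 r1' r2' : EuclideanSpace ℝ (Fin D) → ℝ)
    (t1 t2 t3 t4 : ℝ)
    (hl1 : ∀ y, 0 ≤ l1 y) (hl2 : ∀ y, 0 ≤ l2 y) (hl3 : ∀ y, 0 ≤ l3 y)
    (hl1' : ∀ y, 0 ≤ l1' y) (hl2' : ∀ y, 0 ≤ l2' y)
    (hr0 : ∀ y, 0 ≤ r0 y) (hr1 : ∀ y, 0 ≤ r1 y) (hr2 : ∀ y, 0 ≤ r2 y)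
    (hr3 : ∀ y, 0 ≤ r3 y) (hr1' : ∀ y, 0 ≤ r1' y) (hr2' : ∀ y, 0 ≤ r2' y)
    (ht1 : 0 ≤ t1) (ht2 : 0 ≤ t2) (ht3 : 0 ≤ t3) (ht4 : 0 ≤ t4)
    (hb_l1 : ∀ θ ∈ Θ, ∀ y, ‖Jg g θ y‖ ≤ l1 y)
    (hb_l2 : ∀ θ ∈ Θ, ∀ i : Fin D, ∀ y, ‖dJg g θ i y‖ ≤ l2 y)
    (hb_l3 : ∀ θ ∈ Θ, ∀ i j : Fin D, ∀ y, ‖ddJg g θ i j y‖ ≤ l3 y)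
    (hb_r0 : ∀ θ1 ∈ Θ, ∀ θ2 ∈ Θ, ∀ y, ‖g θ1 y - g θ2 y‖ ≤ r0 y * ‖θ1 - θ2‖)
    (hb_r1 : ∀ θ1 ∈ Θ, ∀ θ2 ∈ Θ, ∀ y, ‖Jg g θ1 y - Jg g θ2 y‖ ≤ r1 y * ‖θ1 - θ2‖)
    (hb_r2 : ∀ θ1 ∈ Θ, ∀ θ2 ∈ Θ, ∀ i : Fin D, ∀ y,
      ‖dJg g θ1 i y - dJg g θ2 i y‖ ≤ r2 y * ‖θ1 - θ2‖)
    (hb_r3 : ∀ θ1 ∈ Θ, ∀ θ2 ∈ Θ, ∀ i j : Fin D, ∀ y,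
      ‖ddJg g θ1 i j y - ddJg g θ2 i j y‖ ≤ r3 y * ‖θ1 - θ2‖)
    (hb_l1' : ∀ θ ∈ Θ, ∀ y, ‖JgInv g θ y‖ ≤ l1' y)
    (hb_l2' : ∀ θ ∈ Θ, ∀ i : Fin D, ∀ y, ‖dJgInv g θ i y‖ ≤ l2' y)
    (hb_r1' : ∀ θ1 ∈ Θ, ∀ θ2 ∈ Θ, ∀ y,
      ‖JgInv g θ1 y - JgInv g θ2 y‖ ≤ r1' y * ‖θ1 - θ2‖)
    (hb_r2' : ∀ θ1 ∈ Θ, ∀ θ2 ∈ Θ, ∀ i : Fin D, ∀ y,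
      ‖dJgInv g θ1 i y - dJgInv g θ2 i y‖ ≤ r2' y * ‖θ1 - θ2‖)
    (hb_t1 : ∀ u, ‖su u‖ ≤ t1)
    (hb_t2 : ∀ u, ‖fderiv ℝ su u‖ ≤ t2)
    (hb_t3 : ∀ u1 u2, ‖su u1 - su u2‖ ≤ t3 * ‖u1 - u2‖)
    (hb_t4 : ∀ u1 u2, ‖fderiv ℝ su u1 - fderiv ℝ su u2‖ ≤ t4 * ‖u1 - u2‖) :
    ∃ L : ℝ, 0 ≤ L ∧ ∀ θ1 ∈ Θ, ∀ θ2 ∈ Θ,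
      |fobj g su θ1 x - fobj g su θ2 x| ≤ L * ‖θ1 - θ2‖ := by
    classical
  have hnD0 : (0:ℝ) ≤ (D:ℝ) := Nat.cast_nonneg D
  have hSb0 : (0:ℝ) ≤ l1 x * t1 + (D:ℝ) * ((D:ℝ) * (l1' x * l2 x)) :=
    add_nonneg (mul_nonneg (hl1 x) ht1)
      (mul_nonneg hnD0 (mul_nonneg hnD0 (mul_nonneg (hl1' x) (hl2 x))))
  refine ⟨max ((l1 x * t1 + (D:ℝ) * ((D:ℝ) * (l1' x * l2 x)))
      * (r1 x * t1 + l1 x * (t3 * r0 x) + (D:ℝ) * ((D:ℝ) * (r1' x * l2 x + l1' x * r2 x)))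
    + (D:ℝ) * ((r2 x * t1 + l2 x * (t3 * r0 x))
      + (r1 x * (t2 * l1 x) + l1 x * (t4 * r0 x * l1 x + t2 * r1 x))
      + (D:ℝ) * ((D:ℝ) * (r1' x * l3 x + l1' x * r3 x)
        + (D:ℝ) * (r2' x * l2 x + l2' x * r2 x)))) 0,
    le_max_right _ _, fun θ1 h1 θ2 h2 => ?_⟩
  have hΔ : (0:ℝ) ≤ ‖θ1 - θ2‖ := norm_nonneg _
  -- bound on the score
  have hSbound : ∀ θ, θ ∈ Θ →
      ‖score g su θ x‖ ≤ l1 x * t1 + (D:ℝ) * ((D:ℝ) * (l1' x * l2 x)) := by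
    intro θ hθ
    have ha : ‖ContinuousLinearMap.adjoint (Jg g θ x) (su (g θ x))‖ ≤ l1 x * t1 := by
      calc ‖ContinuousLinearMap.adjoint (Jg g θ x) (su (g θ x))‖
          ≤ ‖ContinuousLinearMap.adjoint (Jg g θ x)‖ * ‖su (g θ x)‖ :=
            ContinuousLinearMap.le_opNorm _ _
        _ = ‖Jg g θ x‖ * ‖su (g θ x)‖ := by rw [adj_norm]
        _ ≤ l1 x * t1 := mul_le_mul (hb_l1 θ hθ x) (hb_t1 _) (norm_nonneg _) (hl1 x)
    have hv : ‖vvec g θ x‖ ≤ (D:ℝ) * ((D:ℝ) * (l1' x * l2 x)) := by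
      refine (sum_smul_single_norm _).trans ?_
      calc (∑ j, |LinearMap.trace ℝ (EuclideanSpace ℝ (Fin D))
              (JgInv g θ x * dJg g θ j x).toLinearMap|)
          ≤ ∑ _j : Fin D, (D:ℝ) * (l1' x * l2 x) := by
            refine Finset.sum_le_sum fun j _ => ?_
            refine (abs_trace_le _).trans (mul_le_mul_of_nonneg_left ?_ hnD0)
            refine (norm_mul_le _ _).trans ?_
            exact mul_le_mul (hb_l1' θ hθ x) (hb_l2 θ hθ j x) (norm_nonneg _) (hl1' x)
        _ = (D:ℝ) * ((D:ℝ) * (l1' x * l2 x)) := by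
            rw [Finset.sum_const, Finset.card_univ, Fintype.card_fin, nsmul_eq_mul]
    calc ‖score g su θ x‖
        ≤ ‖ContinuousLinearMap.adjoint (Jg g θ x) (su (g θ x))‖ + ‖vvec g θ x‖ :=
          norm_add_le _ _
      _ ≤ _ := add_le_add ha hv
  -- Lipschitz bound on the score
  have hscore_lip : ‖score g su θ1 x - score g su θ2 x‖
      ≤ (r1 x * t1 + l1 x * (t3 * r0 x)
        + (D:ℝ) * ((D:ℝ) * (r1' x * l2 x + l1' x * r2 x))) * ‖θ1 - θ2‖ := by
    have hsplit : score g su θ1 x - score g su θ2 x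
        = (ContinuousLinearMap.adjoint (Jg g θ1 x) (su (g θ1 x))
            - ContinuousLinearMap.adjoint (Jg g θ2 x) (su (g θ2 x)))
          + (vvec g θ1 x - vvec g θ2 x) := by
      show (ContinuousLinearMap.adjoint (Jg g θ1 x) (su (g θ1 x)) + vvec g θ1 x)
        - (ContinuousLinearMap.adjoint (Jg g θ2 x) (su (g θ2 x)) + vvec g θ2 x) = _
      abel
    have hadj : ‖ContinuousLinearMap.adjoint (Jg g θ1 x) (su (g θ1 x))
        - ContinuousLinearMap.adjoint (Jg g θ2 x) (su (g θ2 x))‖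
        ≤ (r1 x * ‖θ1 - θ2‖) * t1 + l1 x * (t3 * (r0 x * ‖θ1 - θ2‖)) := by
      refine (clm_app_sub _ _ _ _).trans ?_
      rw [adj_sub, adj_norm, adj_norm]
      refine add_le_add
        (mul_le_mul (hb_r1 θ1 h1 θ2 h2 x) (hb_t1 _) (norm_nonneg _)
          (mul_nonneg (hr1 x) hΔ)) ?_
      refine mul_le_mul (hb_l1 θ2 h2 x) ((hb_t3 _ _).trans ?_) (norm_nonneg _) (hl1 x)
      exact mul_le_mul_of_nonneg_left (hb_r0 θ1 h1 θ2 h2 x) ht3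
    have hv : ‖vvec g θ1 x - vvec g θ2 x‖
        ≤ (D:ℝ) * ((D:ℝ) * ((r1' x * ‖θ1 - θ2‖) * l2 x + l1' x * (r2 x * ‖θ1 - θ2‖))) := by
      refine (sum_single_sub _ _).trans ?_
      calc (∑ j, |LinearMap.trace ℝ (EuclideanSpace ℝ (Fin D))
              (JgInv g θ1 x * dJg g θ1 j x).toLinearMap
            - LinearMap.trace ℝ (EuclideanSpace ℝ (Fin D))
              (JgInv g θ2 x * dJg g θ2 j x).toLinearMap|)
          ≤ ∑ _j : Fin D, (D:ℝ) * ((r1' x * ‖θ1 - θ2‖) * l2 x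
              + l1' x * (r2 x * ‖θ1 - θ2‖)) := by
            refine Finset.sum_le_sum fun j _ => ?_
            refine (trace_sub_le _ _).trans (mul_le_mul_of_nonneg_left ?_ hnD0)
            refine (mul_sub_mul_norm _ _ _ _).trans (add_le_add ?_ ?_)
            · exact mul_le_mul (hb_r1' θ1 h1 θ2 h2 x) (hb_l2 θ1 h1 j x) (norm_nonneg _)
                (mul_nonneg (hr1' x) hΔ)
            · exact mul_le_mul (hb_l1' θ2 h2 x) (hb_r2 θ1 h1 θ2 h2 j x) (norm_nonneg _)
                (hl1' x)
        _ = _ := by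
            rw [Finset.sum_const, Finset.card_univ, Fintype.card_fin, nsmul_eq_mul]
    calc ‖score g su θ1 x - score g su θ2 x‖
        ≤ ‖ContinuousLinearMap.adjoint (Jg g θ1 x) (su (g θ1 x))
            - ContinuousLinearMap.adjoint (Jg g θ2 x) (su (g θ2 x))‖
          + ‖vvec g θ1 x - vvec g θ2 x‖ := by rw [hsplit]; exact norm_add_le _ _
      _ ≤ ((r1 x * ‖θ1 - θ2‖) * t1 + l1 x * (t3 * (r0 x * ‖θ1 - θ2‖)))
          + (D:ℝ) * ((D:ℝ) * ((r1' x * ‖θ1 - θ2‖) * l2 x + l1' x * (r2 x * ‖θ1 - θ2‖))) :=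
          add_le_add hadj hv
      _ = _ := by ring
  -- Lipschitz bound on each derivative component
  have hei : ∀ i : Fin D, ‖(EuclideanSpace.single i (1:ℝ))‖ = 1 := fun i => by simp
  have hP : ∀ i : Fin D, ‖Pexpr g su x θ1 i - Pexpr g su x θ2 i‖
      ≤ ((r2 x * t1 + l2 x * (t3 * r0 x))
        + (r1 x * (t2 * l1 x) + l1 x * (t4 * r0 x * l1 x + t2 * r1 x))
        + (D:ℝ) * ((D:ℝ) * (r1' x * l3 x + l1' x * r3 x)
          + (D:ℝ) * (r2' x * l2 x + l2' x * r2 x))) * ‖θ1 - θ2‖ := by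
    intro i
    have hA : ‖ContinuousLinearMap.adjoint (dJg g θ1 i x) (su (g θ1 x))
        - ContinuousLinearMap.adjoint (dJg g θ2 i x) (su (g θ2 x))‖
        ≤ (r2 x * ‖θ1 - θ2‖) * t1 + l2 x * (t3 * (r0 x * ‖θ1 - θ2‖)) := by
      refine (clm_app_sub _ _ _ _).trans ?_
      rw [adj_sub, adj_norm, adj_norm]
      refine add_le_add
        (mul_le_mul (hb_r2 θ1 h1 θ2 h2 i x) (hb_t1 _) (norm_nonneg _)
          (mul_nonneg (hr2 x) hΔ)) ?_
      refine mul_le_mul (hb_l2 θ2 h2 i x) ((hb_t3 _ _).trans ?_) (norm_nonneg _) (hl2 x)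
      exact mul_le_mul_of_nonneg_left (hb_r0 θ1 h1 θ2 h2 x) ht3
    have hJ1e : ‖Jg g θ1 x (EuclideanSpace.single i 1)‖ ≤ l1 x := by
      refine ((Jg g θ1 x).le_opNorm _).trans ?_
      rw [hei i, mul_one]; exact hb_l1 θ1 h1 x
    have hJe_sub : ‖Jg g θ1 x (EuclideanSpace.single i 1)
        - Jg g θ2 x (EuclideanSpace.single i 1)‖ ≤ r1 x * ‖θ1 - θ2‖ := by
      have h : Jg g θ1 x (EuclideanSpace.single i 1) - Jg g θ2 x (EuclideanSpace.single i 1)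
          = (Jg g θ1 x - Jg g θ2 x) (EuclideanSpace.single i 1) := by
        simp [ContinuousLinearMap.sub_apply]
      rw [h]
      refine ((Jg g θ1 x - Jg g θ2 x).le_opNorm _).trans ?_
      rw [hei i, mul_one]; exact hb_r1 θ1 h1 θ2 h2 x
    have hB : ‖ContinuousLinearMap.adjoint (Jg g θ1 x)
          ((fderiv ℝ su (g θ1 x)) ((Jg g θ1 x) (EuclideanSpace.single i 1)))
        - ContinuousLinearMap.adjoint (Jg g θ2 x)
          ((fderiv ℝ su (g θ2 x)) ((Jg g θ2 x) (EuclideanSpace.single i 1)))‖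
        ≤ (r1 x * ‖θ1 - θ2‖) * (t2 * l1 x)
          + l1 x * ((t4 * (r0 x * ‖θ1 - θ2‖)) * l1 x + t2 * (r1 x * ‖θ1 - θ2‖)) := by
      refine (clm_app_sub _ _ _ _).trans ?_
      rw [adj_sub, adj_norm, adj_norm]
      refine add_le_add ?_ ?_
      · refine mul_le_mul (hb_r1 θ1 h1 θ2 h2 x) ?_ (norm_nonneg _)
          (mul_nonneg (hr1 x) hΔ)
        refine ((fderiv ℝ su (g θ1 x)).le_opNorm _).trans ?_
        exact mul_le_mul (hb_t2 _) hJ1e (norm_nonneg _) ht2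
      · refine mul_le_mul (hb_l1 θ2 h2 x) ?_ (norm_nonneg _) (hl1 x)
        refine (clm_app_sub _ _ _ _).trans (add_le_add ?_ ?_)
        · refine mul_le_mul ((hb_t4 _ _).trans
            (mul_le_mul_of_nonneg_left (hb_r0 θ1 h1 θ2 h2 x) ht4)) hJ1e
            (norm_nonneg _) (by exact mul_nonneg ht4 (mul_nonneg (hr0 x) hΔ))
        · exact mul_le_mul (hb_t2 _) hJe_sub (norm_nonneg _) ht2
    have hC : ‖(∑ j, ((LinearMap.trace ℝ (EuclideanSpace ℝ (Fin D))
            ((JgInv g θ1 x * ddJg g θ1 j i x).toLinearMap)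
          + LinearMap.trace ℝ (EuclideanSpace ℝ (Fin D))
            ((dJgInv g θ1 i x * dJg g θ1 j x).toLinearMap)) • EuclideanSpace.single j (1:ℝ)))
        - ∑ j, ((LinearMap.trace ℝ (EuclideanSpace ℝ (Fin D))
            ((JgInv g θ2 x * ddJg g θ2 j i x).toLinearMap)
          + LinearMap.trace ℝ (EuclideanSpace ℝ (Fin D))
            ((dJgInv g θ2 i x * dJg g θ2 j x).toLinearMap)) • EuclideanSpace.single j (1:ℝ))‖
        ≤ (D:ℝ) * ((D:ℝ) * ((r1' x * ‖θ1 - θ2‖) * l3 x + l1' x * (r3 x * ‖θ1 - θ2‖))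
          + (D:ℝ) * ((r2' x * ‖θ1 - θ2‖) * l2 x + l2' x * (r2 x * ‖θ1 - θ2‖))) := by
      refine (sum_single_sub _ _).trans ?_
      have hstep : ∀ j : Fin D,
          |(LinearMap.trace ℝ (EuclideanSpace ℝ (Fin D))
              ((JgInv g θ1 x * ddJg g θ1 j i x).toLinearMap)
            + LinearMap.trace ℝ (EuclideanSpace ℝ (Fin D))
              ((dJgInv g θ1 i x * dJg g θ1 j x).toLinearMap))
          - (LinearMap.trace ℝ (EuclideanSpace ℝ (Fin D))
              ((JgInv g θ2 x * ddJg g θ2 j i x).toLinearMap)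
            + LinearMap.trace ℝ (EuclideanSpace ℝ (Fin D))
              ((dJgInv g θ2 i x * dJg g θ2 j x).toLinearMap))|
          ≤ (D:ℝ) * ((r1' x * ‖θ1 - θ2‖) * l3 x + l1' x * (r3 x * ‖θ1 - θ2‖))
            + (D:ℝ) * ((r2' x * ‖θ1 - θ2‖) * l2 x + l2' x * (r2 x * ‖θ1 - θ2‖)) := by
        intro j
        have hre : (LinearMap.trace ℝ (EuclideanSpace ℝ (Fin D))
              ((JgInv g θ1 x * ddJg g θ1 j i x).toLinearMap)
            + LinearMap.trace ℝ (EuclideanSpace ℝ (Fin D))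
              ((dJgInv g θ1 i x * dJg g θ1 j x).toLinearMap))
          - (LinearMap.trace ℝ (EuclideanSpace ℝ (Fin D))
              ((JgInv g θ2 x * ddJg g θ2 j i x).toLinearMap)
            + LinearMap.trace ℝ (EuclideanSpace ℝ (Fin D))
              ((dJgInv g θ2 i x * dJg g θ2 j x).toLinearMap))
          = (LinearMap.trace ℝ (EuclideanSpace ℝ (Fin D))
              ((JgInv g θ1 x * ddJg g θ1 j i x).toLinearMap)
            - LinearMap.trace ℝ (EuclideanSpace ℝ (Fin D))
              ((JgInv g θ2 x * ddJg g θ2 j i x).toLinearMap))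
          + (LinearMap.trace ℝ (EuclideanSpace ℝ (Fin D))
              ((dJgInv g θ1 i x * dJg g θ1 j x).toLinearMap)
            - LinearMap.trace ℝ (EuclideanSpace ℝ (Fin D))
              ((dJgInv g θ2 i x * dJg g θ2 j x).toLinearMap)) := by ring
        rw [hre]
        refine (abs_add_le _ _).trans (add_le_add ?_ ?_)
        · refine (trace_sub_le _ _).trans (mul_le_mul_of_nonneg_left ?_ hnD0)
          refine (mul_sub_mul_norm _ _ _ _).trans (add_le_add ?_ ?_)
          · exact mul_le_mul (hb_r1' θ1 h1 θ2 h2 x) (hb_l3 θ1 h1 j i x) (norm_nonneg _)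
              (mul_nonneg (hr1' x) hΔ)
          · exact mul_le_mul (hb_l1' θ2 h2 x) (hb_r3 θ1 h1 θ2 h2 j i x) (norm_nonneg _)
              (hl1' x)
        · refine (trace_sub_le _ _).trans (mul_le_mul_of_nonneg_left ?_ hnD0)
          refine (mul_sub_mul_norm _ _ _ _).trans (add_le_add ?_ ?_)
          · exact mul_le_mul (hb_r2' θ1 h1 θ2 h2 i x) (hb_l2 θ1 h1 j x) (norm_nonneg _)
              (mul_nonneg (hr2' x) hΔ)
          · exact mul_le_mul (hb_l2' θ2 h2 i x) (hb_r2 θ1 h1 θ2 h2 j x) (norm_nonneg _)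
              (hl2' x)
      calc (∑ j : Fin D, |_|) ≤ ∑ _j : Fin D,
            ((D:ℝ) * ((r1' x * ‖θ1 - θ2‖) * l3 x + l1' x * (r3 x * ‖θ1 - θ2‖))
            + (D:ℝ) * ((r2' x * ‖θ1 - θ2‖) * l2 x + l2' x * (r2 x * ‖θ1 - θ2‖))) :=
            Finset.sum_le_sum fun j _ => hstep j
        _ = _ := by
            rw [Finset.sum_const, Finset.card_univ, Fintype.card_fin, nsmul_eq_mul]
    have hsplit : Pexpr g su x θ1 i - Pexpr g su x θ2 i
        = (ContinuousLinearMap.adjoint (dJg g θ1 i x) (su (g θ1 x))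
            - ContinuousLinearMap.adjoint (dJg g θ2 i x) (su (g θ2 x)))
          + (ContinuousLinearMap.adjoint (Jg g θ1 x)
              ((fderiv ℝ su (g θ1 x)) ((Jg g θ1 x) (EuclideanSpace.single i 1)))
            - ContinuousLinearMap.adjoint (Jg g θ2 x)
              ((fderiv ℝ su (g θ2 x)) ((Jg g θ2 x) (EuclideanSpace.single i 1))))
          + ((∑ j, ((LinearMap.trace ℝ (EuclideanSpace ℝ (Fin D))
                ((JgInv g θ1 x * ddJg g θ1 j i x).toLinearMap)
              + LinearMap.trace ℝ (EuclideanSpace ℝ (Fin D))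
                ((dJgInv g θ1 i x * dJg g θ1 j x).toLinearMap)) • EuclideanSpace.single j (1:ℝ)))
            - ∑ j, ((LinearMap.trace ℝ (EuclideanSpace ℝ (Fin D))
                ((JgInv g θ2 x * ddJg g θ2 j i x).toLinearMap)
              + LinearMap.trace ℝ (EuclideanSpace ℝ (Fin D))
                ((dJgInv g θ2 i x * dJg g θ2 j x).toLinearMap)) • EuclideanSpace.single j (1:ℝ))) := by
      rw [Pexpr, Pexpr]; abel
    calc ‖Pexpr g su x θ1 i - Pexpr g su x θ2 i‖
        ≤ _ + _ + _ := by rw [hsplit]; exact norm_add₃_le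
      _ ≤ ((r2 x * ‖θ1 - θ2‖) * t1 + l2 x * (t3 * (r0 x * ‖θ1 - θ2‖)))
          + ((r1 x * ‖θ1 - θ2‖) * (t2 * l1 x)
            + l1 x * ((t4 * (r0 x * ‖θ1 - θ2‖)) * l1 x + t2 * (r1 x * ‖θ1 - θ2‖)))
          + (D:ℝ) * ((D:ℝ) * ((r1' x * ‖θ1 - θ2‖) * l3 x + l1' x * (r3 x * ‖θ1 - θ2‖))
            + (D:ℝ) * ((r2' x * ‖θ1 - θ2‖) * l2 x + l2' x * (r2 x * ‖θ1 - θ2‖))) :=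
          add_le_add (add_le_add hA hB) hC
      _ = _ := by ring
  -- combine
  have hf1 := fobj_eq g su θ1 x (hg θ1 h1) (hJunit θ1 h1) hsu
  have hf2 := fobj_eq g su θ2 x (hg θ2 h2) (hJunit θ2 h2) hsu
  rw [hf1, hf2]
  have hhalf : |(1/2) * ‖score g su θ1 x‖^2 - (1/2) * ‖score g su θ2 x‖^2|
      ≤ (l1 x * t1 + (D:ℝ) * ((D:ℝ) * (l1' x * l2 x)))
        * ((r1 x * t1 + l1 x * (t3 * r0 x)
          + (D:ℝ) * ((D:ℝ) * (r1' x * l2 x + l1' x * r2 x))) * ‖θ1 - θ2‖) :=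
    (half_sq_diff _ _ (hSbound θ1 h1) (hSbound θ2 h2)).trans
      (mul_le_mul_of_nonneg_left hscore_lip hSb0)
  have hsum : |(∑ i, (Pexpr g su x θ1 i) i) - ∑ i, (Pexpr g su x θ2 i) i|
      ≤ (D:ℝ) * (((r2 x * t1 + l2 x * (t3 * r0 x))
        + (r1 x * (t2 * l1 x) + l1 x * (t4 * r0 x * l1 x + t2 * r1 x))
        + (D:ℝ) * ((D:ℝ) * (r1' x * l3 x + l1' x * r3 x)
          + (D:ℝ) * (r2' x * l2 x + l2' x * r2 x))) * ‖θ1 - θ2‖) := by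
    rw [← Finset.sum_sub_distrib]
    refine (Finset.abs_sum_le_sum_abs _ _).trans ?_
    calc (∑ i, |(Pexpr g su x θ1 i) i - (Pexpr g su x θ2 i) i|)
        ≤ ∑ i : Fin D, ((r2 x * t1 + l2 x * (t3 * r0 x))
          + (r1 x * (t2 * l1 x) + l1 x * (t4 * r0 x * l1 x + t2 * r1 x))
          + (D:ℝ) * ((D:ℝ) * (r1' x * l3 x + l1' x * r3 x)
            + (D:ℝ) * (r2' x * l2 x + l2' x * r2 x))) * ‖θ1 - θ2‖ := by
          refine Finset.sum_le_sum fun i _ => ?_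
          have hco : (Pexpr g su x θ1 i) i - (Pexpr g su x θ2 i) i
              = (Pexpr g su x θ1 i - Pexpr g su x θ2 i) i := by
            simp
          rw [hco]
          exact (coord_le_norm _ i).trans (hP i)
      _ = _ := by
          rw [Finset.sum_const, Finset.card_univ, Fintype.card_fin, nsmul_eq_mul]
  calc |((1/2) * ‖score g su θ1 x‖^2 + ∑ i, (Pexpr g su x θ1 i) i)
        - ((1/2) * ‖score g su θ2 x‖^2 + ∑ i, (Pexpr g su x θ2 i) i)|
      = |((1/2) * ‖score g su θ1 x‖^2 - (1/2) * ‖score g su θ2 x‖^2)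
        + ((∑ i, (Pexpr g su x θ1 i) i) - ∑ i, (Pexpr g su x θ2 i) i)| := by ring_nf
    _ ≤ _ + _ := abs_add_le _ _
    _ ≤ (l1 x * t1 + (D:ℝ) * ((D:ℝ) * (l1' x * l2 x)))
        * ((r1 x * t1 + l1 x * (t3 * r0 x)
          + (D:ℝ) * ((D:ℝ) * (r1' x * l2 x + l1' x * r2 x))) * ‖θ1 - θ2‖)
      + (D:ℝ) * (((r2 x * t1 + l2 x * (t3 * r0 x))
        + (r1 x * (t2 * l1 x) + l1 x * (t4 * r0 x * l1 x + t2 * r1 x))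
        + (D:ℝ) * ((D:ℝ) * (r1' x * l3 x + l1' x * r3 x)
          + (D:ℝ) * (r2' x * l2 x + l2' x * r2 x))) * ‖θ1 - θ2‖) := add_le_add hhalf hsum
    _ = ((l1 x * t1 + (D:ℝ) * ((D:ℝ) * (l1' x * l2 x)))
      * (r1 x * t1 + l1 x * (t3 * r0 x) + (D:ℝ) * ((D:ℝ) * (r1' x * l2 x + l1' x * r2 x)))
    + (D:ℝ) * ((r2 x * t1 + l2 x * (t3 * r0 x))
      + (r1 x * (t2 * l1 x) + l1 x * (t4 * r0 x * l1 x + t2 * r1 x))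
      + (D:ℝ) * ((D:ℝ) * (r1' x * l3 x + l1' x * r3 x)
        + (D:ℝ) * (r2' x * l2 x + l2' x * r2 x)))) * ‖θ1 - θ2‖ := by ring
    _ ≤ _ := mul_le_mul_of_nonneg_right (le_max_left _ _) hΔ
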